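/- Let T be a contraction on H, K := ker(Id − T*T), K⋆ := ker(Id − TT*), A_T := {(x, Tx) : x ∈ K} ⊆ H × H, Q := K^⊥ × {0} and Q⋆ := {0} × K⋆^⊥. Then A_T, Q and Q⋆ are pairwise orthogonal closed subspaces of the Hilbert space H × H and A_T^⊥s = A_T ⊕ Q ⊕ Q⋆ (an orthogonal direct sum), where A_T^⊥s is the symplectic orthogonal of A_T with respect to the standard symplectic form. -/

import Mathlib

open scoped InnerProductSpace
open ContinuousLinearMap

/-- For a contraction `T` on `H`, with `K = ker(Id − T*T)`,
`K⋆ = ker(Id − TT*)`, `A_T = {(x,Tx) : x ∈ K}`, `Q = K^⊥ × {0}` and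
`Q⋆ = {0} × K⋆^⊥`: these are pairwise orthogonal closed subspaces of the
Hilbert space `H × H` (whose inner product is `⟨a,b⟩ = ⟨a₁,b₁⟩ + ⟨a₂,b₂⟩`),
and the symplectic orthogonal `A_T^⊥s` (with respect to the standard
symplectic form, inner products linear in the first variable) is the
orthogonal direct sum `A_T ⊕ Q ⊕ Q⋆`. -/
theorem symplecticOrthogonal_orthogonal_decomposition
    {H : Type*} [NormedAddCommGroup H] [InnerProductSpace ℂ H] [CompleteSpace H]
    (T : H →L[ℂ] H) (hT : ‖T‖ ≤ 1)
    (K Ks : Submodule ℂ H)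
    (hK : K = LinearMap.ker ((1 - adjoint T ∘L T : H →L[ℂ] H) : H →ₗ[ℂ] H))
    (hKs : Ks = LinearMap.ker ((1 - T ∘L adjoint T : H →L[ℂ] H) : H →ₗ[ℂ] H))
    (AT Q Qs : Submodule ℂ (H × H))
    (hAT : (AT : Set (H × H)) = {p : H × H | ∃ x ∈ K, p = (x, T x)})
    (hQ : Q = Kᗮ.prod (⊥ : Submodule ℂ H))
    (hQs : Qs = (⊥ : Submodule ℂ H).prod Ksᗮ)
    (ATs : Set (H × H))
    (hATs : ATs = {a : H × H | ∀ b ∈ (AT : Set (H × H)),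
      Complex.I * ⟪b.1, a.1⟫_ℂ - Complex.I * ⟪b.2, a.2⟫_ℂ = 0}) :
    (∀ a ∈ AT, ∀ b ∈ Q, ⟪a.1, b.1⟫_ℂ + ⟪a.2, b.2⟫_ℂ = 0) ∧
    (∀ a ∈ AT, ∀ b ∈ Qs, ⟪a.1, b.1⟫_ℂ + ⟪a.2, b.2⟫_ℂ = 0) ∧
    (∀ a ∈ Q, ∀ b ∈ Qs, ⟪a.1, b.1⟫_ℂ + ⟪a.2, b.2⟫_ℂ = 0) ∧
    IsClosed (AT : Set (H × H)) ∧ IsClosed (Q : Set (H × H)) ∧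
    IsClosed (Qs : Set (H × H)) ∧
    ATs = {p : H × H | ∃ a ∈ AT, ∃ q ∈ Q, ∃ r ∈ Qs, p = a + q + r} := by
  -- basic algebraic facts
  have hKmem : ∀ x ∈ K, adjoint T (T x) = x := by
    intro x hx
    rw [hK, LinearMap.mem_ker] at hx
    have h : x - adjoint T (T x) = 0 := by
      simpa [ContinuousLinearMap.sub_apply, ContinuousLinearMap.one_apply,
        ContinuousLinearMap.comp_apply] using hx
    have := sub_eq_zero.mp h
    exact this.symm
  have hKsmem : ∀ s ∈ Ks, T (adjoint T s) = s := by
    intro s hs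
    rw [hKs, LinearMap.mem_ker] at hs
    have h : s - T (adjoint T s) = 0 := by
      simpa [ContinuousLinearMap.sub_apply, ContinuousLinearMap.one_apply,
        ContinuousLinearMap.comp_apply] using hs
    exact (sub_eq_zero.mp h).symm
  have hTK : ∀ x ∈ K, T x ∈ Ks := by
    intro x hx
    rw [hKs, LinearMap.mem_ker]
    show (T x) - (T ∘L adjoint T) (T x) = 0
    rw [ContinuousLinearMap.comp_apply, hKmem x hx, sub_self]
  have hT'Ks : ∀ s ∈ Ks, adjoint T s ∈ K := by
    intro s hs
    rw [hK, LinearMap.mem_ker]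
    show (adjoint T s) - (adjoint T ∘L T) (adjoint T s) = 0
    rw [ContinuousLinearMap.comp_apply, hKsmem s hs, sub_self]
  have hT'Orth : ∀ r ∈ Ksᗮ, adjoint T r ∈ Kᗮ := by
    intro r hr
    rw [Submodule.mem_orthogonal]
    intro y hy
    rw [adjoint_inner_right]
    exact (Submodule.mem_orthogonal Ks r).mp hr (T y) (hTK y hy)
  have hKclosed : IsClosed (K : Set H) := by
    rw [hK]; exact ContinuousLinearMap.isClosed_ker _
  have hKsclosed : IsClosed (Ks : Set H) := by
    rw [hKs]; exact ContinuousLinearMap.isClosed_ker _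
  refine ⟨?_, ?_, ?_, ?_, ?_, ?_, ?_⟩
  · -- AT ⊥ Q
    intro a ha b hb
    have ha' : (a : H × H) ∈ (AT : Set (H × H)) := ha
    rw [hAT] at ha'
    obtain ⟨x, hx, hax⟩ := ha'
    rw [hQ, Submodule.mem_prod] at hb
    obtain ⟨hb1, hb2⟩ := hb
    rw [Submodule.mem_bot] at hb2
    rw [hax]
    simp only
    rw [(Submodule.mem_orthogonal K b.1).mp hb1 x hx, hb2, inner_zero_right, add_zero]
  · -- AT ⊥ Qs
    intro a ha b hb
    have ha' : (a : H × H) ∈ (AT : Set (H × H)) := ha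
    rw [hAT] at ha'
    obtain ⟨x, hx, hax⟩ := ha'
    rw [hQs, Submodule.mem_prod] at hb
    obtain ⟨hb1, hb2⟩ := hb
    rw [Submodule.mem_bot] at hb1
    rw [hax]
    simp only
    rw [(Submodule.mem_orthogonal Ks b.2).mp hb2 (T x) (hTK x hx), hb1,
      inner_zero_right, zero_add]
  · -- Q ⊥ Qs
    intro a ha b hb
    rw [hQ, Submodule.mem_prod] at ha
    rw [hQs, Submodule.mem_prod] at hb
    rw [Submodule.mem_bot] at *
    rw [ha.2, hb.1, inner_zero_right, inner_zero_left, add_zero]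
  · -- AT closed
    have : (AT : Set (H × H)) = (Prod.fst ⁻¹' (K : Set H)) ∩ {p : H × H | T p.1 = p.2} := by
      rw [hAT]
      ext p
      constructor
      · rintro ⟨x, hx, rfl⟩; exact ⟨hx, rfl⟩
      · rintro ⟨h1, h2⟩; exact ⟨p.1, h1, Prod.ext rfl h2.symm⟩
    rw [this]
    exact (hKclosed.preimage continuous_fst).inter
      (isClosed_eq (T.continuous.comp continuous_fst) continuous_snd)
  · -- Q closed
    rw [hQ]
    have hb : IsClosed ((⊥ : Submodule ℂ H) : Set H) := by
      simp only [Submodule.bot_coe]; exact isClosed_singleton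
    exact (K.isClosed_orthogonal).prod hb
  · -- Qs closed
    rw [hQs]
    have hb : IsClosed ((⊥ : Submodule ℂ H) : Set H) := by
      simp only [Submodule.bot_coe]; exact isClosed_singleton
    exact hb.prod (Ks.isClosed_orthogonal)
  · -- main decomposition
    have hATmem : ∀ x ∈ K, (x, T x) ∈ AT := by
      intro x hx
      show (x, T x) ∈ (AT : Set (H × H))
      rw [hAT]; exact ⟨x, hx, rfl⟩
    ext p
    rw [hATs]
    simp only [Set.mem_setOf_eq]
    constructor
    · intro hp
      -- p.1 - T* p.2 ∈ Kᗮ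
      have key : ∀ y ∈ K, ⟪y, p.1⟫_ℂ = ⟪T y, p.2⟫_ℂ := by
        intro y hy
        have hb : ((y, T y) : H × H) ∈ (AT : Set (H × H)) := hATmem y hy
        have := hp (y, T y) hb
        have h2 : Complex.I * (⟪y, p.1⟫_ℂ - ⟪T y, p.2⟫_ℂ) = 0 := by ring_nf; ring_nf at this; exact this
        have h3 := (mul_eq_zero.mp h2).resolve_left Complex.I_ne_zero
        linear_combination h3
      have horth : p.1 - adjoint T p.2 ∈ Kᗮ := by
        rw [Submodule.mem_orthogonal]
        intro y hy
        rw [inner_sub_right, adjoint_inner_right, key y hy, sub_self]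
      -- decompose p.2 over Ks
      have : CompleteSpace Ks := hKsclosed.completeSpace_coe
      obtain ⟨s, hs, r, hr, hsr⟩ := Ks.exists_add_mem_mem_orthogonal p.2
      set x := adjoint T s with hxdef
      have hxK : x ∈ K := hT'Ks s hs
      have hTx : T x = s := hKsmem s hs
      refine ⟨(x, T x), hATmem x hxK, (p.1 - x, 0), ?_, (0, r), ?_, ?_⟩
      · rw [hQ, Submodule.mem_prod]
        refine ⟨?_, Submodule.zero_mem _⟩
        have h1 : p.1 - x = (p.1 - adjoint T p.2) + adjoint T r := by
          rw [hxdef, hsr]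
          simp [map_add]
          abel
        rw [h1]
        exact Submodule.add_mem _ horth (hT'Orth r hr)
      · rw [hQs, Submodule.mem_prod]
        exact ⟨Submodule.zero_mem _, hr⟩
      · rw [Prod.ext_iff]
        constructor
        · simp
        · simp [hTx, hsr.symm]
    · rintro ⟨a, ha, q, hq, r, hr, rfl⟩
      have ha' : (a : H × H) ∈ (AT : Set (H × H)) := ha
      rw [hAT] at ha'
      obtain ⟨x, hx, hax⟩ := ha'
      rw [hQ, Submodule.mem_prod] at hq
      rw [hQs, Submodule.mem_prod] at hr
      rw [Submodule.mem_bot] at hq hr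
      intro b hb
      rw [hAT] at hb
      obtain ⟨y, hy, hby⟩ := hb
      rw [hax, hby]
      simp only [Prod.fst_add, Prod.snd_add]
      have e1 : ⟪y, x + q.1 + r.1⟫_ℂ = ⟪y, x⟫_ℂ := by
        rw [hr.1]
        rw [inner_add_right, inner_add_right,
          (Submodule.mem_orthogonal K q.1).mp hq.1 y hy, inner_zero_right]
        ring
      have e2 : ⟪T y, T x + q.2 + r.2⟫_ℂ = ⟪y, x⟫_ℂ := by
        rw [hq.2]
        rw [inner_add_right, inner_add_right,
          (Submodule.mem_orthogonal Ks r.2).mp hr.2 (T y) (hTK y hy),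
          inner_zero_right, ← adjoint_inner_right, hKmem x hx]
        ring
      rw [e1, e2]
      ring
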